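/- Let B ∈ ℂ^{m×n}, W ∈ ℂ^{n×m}, let k be a natural number with k = ind(BW), let H be the Moore–Penrose inverse of B, let X be a minimal rank W-weighted weak Drazin inverse of B, and set Y = H·B·W·X·W. Then: (i) B·Y is idempotent with col(B·Y) = col((B·W)^k) and N(B·Y) = N(X·W); (ii) Y·B is idempotent with col(Y·B) = col(H·(B·W)^{k+1}) and N(Y·B) = N(X·W·B); (iii) Y·B·Y = Y, col(Y) = col(H·(B·W)^{k+1}) and N(Y) = N(X·W). -/
import Mathlib


open Matrix

/-- The index of a square complex matrix: the least `j` with `rank (M^j) = rank (M^(j+1))`. -/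
noncomputable def matIndex {p : ℕ} (M : Matrix (Fin p) (Fin p) ℂ) : ℕ :=
  sInf {j : ℕ | (M ^ j).rank = (M ^ (j + 1)).rank}

/-- The column space of a complex matrix: the range of `v ↦ M *ᵥ v`. -/
noncomputable def colSpace {a b : ℕ} (M : Matrix (Fin a) (Fin b) ℂ) :
    Submodule ℂ (Fin a → ℂ) :=
  LinearMap.range M.mulVecLin

/-- The null space of a complex matrix: the kernel of `v ↦ M *ᵥ v`. -/
noncomputable def nullSpace {a b : ℕ} (M : Matrix (Fin a) (Fin b) ℂ) :
    Submodule ℂ (Fin b → ℂ) :=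
  LinearMap.ker M.mulVecLin

/- ### Auxiliary lemmas -/

lemma colSpace_mul {a b c : ℕ} (M : Matrix (Fin a) (Fin b) ℂ) (N : Matrix (Fin b) (Fin c) ℂ) :
    colSpace (M * N) = Submodule.map M.mulVecLin (colSpace N) := by
  rw [colSpace, colSpace, Matrix.mulVecLin_mul, LinearMap.range_comp]

lemma colSpace_mul_le {a b c : ℕ} (M : Matrix (Fin a) (Fin b) ℂ) (N : Matrix (Fin b) (Fin c) ℂ) :
    colSpace (M * N) ≤ colSpace M := by
  rw [colSpace_mul]
  rintro v ⟨u, -, rfl⟩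
  exact ⟨u, rfl⟩

lemma mem_colSpace {a b : ℕ} {M : Matrix (Fin a) (Fin b) ℂ} {v : Fin a → ℂ} :
    v ∈ colSpace M ↔ ∃ u, M *ᵥ u = v := by
  simp [colSpace, LinearMap.mem_range, Matrix.mulVecLin_apply]

lemma mem_nullSpace {a b : ℕ} {M : Matrix (Fin a) (Fin b) ℂ} {v : Fin b → ℂ} :
    v ∈ nullSpace M ↔ M *ᵥ v = 0 := by
  simp [nullSpace, LinearMap.mem_ker, Matrix.mulVecLin_apply]

lemma rank_eq_finrank_colSpace {a b : ℕ} (M : Matrix (Fin a) (Fin b) ℂ) :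
    M.rank = Module.finrank ℂ (colSpace M) := rfl

lemma matrix_ext_of_mulVec {a b : ℕ} {M N : Matrix (Fin a) (Fin b) ℂ}
    (h : ∀ v, M *ᵥ v = N *ᵥ v) : M = N := by
  ext i j
  have := congrFun (h (Pi.single j 1)) i
  simpa [Matrix.mulVec_single] using this

/-- The defining property of `matIndex`: the rank of powers stabilizes there. -/
lemma matIndex_rank_eq {p : ℕ} (M : Matrix (Fin p) (Fin p) ℂ) :
    (M ^ matIndex M).rank = (M ^ (matIndex M + 1)).rank := by
  have hne : {j : ℕ | (M ^ j).rank = (M ^ (j + 1)).rank}.Nonempty := by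
    by_contra hc
    rw [Set.not_nonempty_iff_eq_empty, Set.eq_empty_iff_forall_notMem] at hc
    have hdec : ∀ j, (M ^ (j + 1)).rank < (M ^ j).rank := by
      intro j
      refine lt_of_le_of_ne ?_ fun h => hc j h.symm
      rw [pow_succ]
      exact Matrix.rank_mul_le_left _ _
    have hbound : ∀ j, (M ^ j).rank + j ≤ (M ^ 0).rank := by
      intro j
      induction j with
      | zero => simp
      | succ n ih => have := hdec n; omega
    have := hbound ((M ^ 0).rank + 1)
    omega
  exact Nat.sInf_mem hne

/-- **Lemma 3.6.** Projection properties of the W-weighted weak MPD inverse `Y = H·B·W·X·W`. -/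
theorem weighted_weak_MPD_projections {m n : ℕ}
    (B : Matrix (Fin m) (Fin n) ℂ) (W : Matrix (Fin n) (Fin m) ℂ)
    (k : ℕ) (hk : k = matIndex (B * W))
    (H : Matrix (Fin n) (Fin m) ℂ)
    (hH1 : B * H * B = B) (hH2 : H * B * H = H)
    (hH3 : (B * H)ᴴ = B * H) (hH4 : (H * B)ᴴ = H * B)
    (X : Matrix (Fin m) (Fin n) ℂ)
    (hX1 : X * W * (B * W) ^ (k + 1) = (B * W) ^ k)
    (hX2 : X.rank = ((B * W) ^ k).rank)
    (Y : Matrix (Fin n) (Fin m) ℂ) (hY : Y = H * B * W * X * W) :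
    ((B * Y) * (B * Y) = B * Y ∧
      colSpace (B * Y) = colSpace ((B * W) ^ k) ∧
      nullSpace (B * Y) = nullSpace (X * W)) ∧
    ((Y * B) * (Y * B) = Y * B ∧
      colSpace (Y * B) = colSpace (H * (B * W) ^ (k + 1)) ∧
      nullSpace (Y * B) = nullSpace (X * W * B)) ∧
    (Y * B * Y = Y ∧
      colSpace Y = colSpace (H * (B * W) ^ (k + 1)) ∧
      nullSpace Y = nullSpace (X * W)) := by
  -- rank of (B*W)^k equals rank of (B*W)^(k+1), since k is the index
  have hkmem : ((B * W) ^ k).rank = ((B * W) ^ (k + 1)).rank := by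
    rw [hk]; exact matIndex_rank_eq (B * W)
  -- column spaces of (B*W)^(k+1) and (B*W)^k coincide
  have hcolA : colSpace ((B * W) ^ (k + 1)) = colSpace ((B * W) ^ k) := by
    refine Submodule.eq_of_le_of_finrank_le ?_ ?_
    · rw [pow_succ]; exact colSpace_mul_le _ _
    · rw [← rank_eq_finrank_colSpace, ← rank_eq_finrank_colSpace]; exact hkmem.le
  -- null spaces of (B*W)^k and (B*W)^(k+1) coincide
  have hnull : nullSpace ((B * W) ^ k) = nullSpace ((B * W) ^ (k + 1)) := by
    refine Submodule.eq_of_le_of_finrank_le ?_ ?_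
    · intro v hv
      rw [mem_nullSpace] at hv ⊢
      rw [pow_succ', ← Matrix.mulVec_mulVec, hv, Matrix.mulVec_zero]
    · have h1 := LinearMap.finrank_range_add_finrank_ker ((B * W) ^ k).mulVecLin
      have h2 := LinearMap.finrank_range_add_finrank_ker ((B * W) ^ (k + 1)).mulVecLin
      have hr : Module.finrank ℂ (LinearMap.range ((B * W) ^ k).mulVecLin)
          = Module.finrank ℂ (LinearMap.range ((B * W) ^ (k + 1)).mulVecLin) := hkmem
      show Module.finrank ℂ (LinearMap.ker ((B * W) ^ (k + 1)).mulVecLin)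
          ≤ Module.finrank ℂ (LinearMap.ker ((B * W) ^ k).mulVecLin)
      omega
  -- the column space of X*W equals that of (B*W)^k
  have hcolG : colSpace (X * W) = colSpace ((B * W) ^ k) := by
    refine (Submodule.eq_of_le_of_finrank_le ?_ ?_).symm
    · rw [← hX1]; exact colSpace_mul_le _ _
    · rw [← rank_eq_finrank_colSpace, ← rank_eq_finrank_colSpace]
      calc (X * W).rank ≤ X.rank := Matrix.rank_mul_le_left _ _
        _ = ((B * W) ^ k).rank := hX2
  -- injectivity of (B*W) on the column space of (B*W)^k
  have hAinj : ∀ w ∈ colSpace ((B * W) ^ k), (B * W) *ᵥ w = 0 → w = 0 := by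
    intro w hw h0
    obtain ⟨u, rfl⟩ := mem_colSpace.mp hw
    rw [Matrix.mulVec_mulVec, ← pow_succ'] at h0
    have : u ∈ nullSpace ((B * W) ^ k) := hnull ▸ mem_nullSpace.mpr h0
    exact mem_nullSpace.mp this
  -- injectivity of H*(B*W) on the column space of (B*W)^k
  have e3 : B * (H * (B * W) ^ (k + 1)) = (B * W) ^ (k + 1) := by
    calc B * (H * (B * W) ^ (k + 1)) = B * H * B * (W * (B * W) ^ k) := by
          rw [pow_succ']; simp only [Matrix.mul_assoc]
      _ = B * (W * (B * W) ^ k) := by rw [hH1]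
      _ = (B * W) ^ (k + 1) := by rw [pow_succ', Matrix.mul_assoc]
  have hHAinj : ∀ w ∈ colSpace ((B * W) ^ k), (H * (B * W)) *ᵥ w = 0 → w = 0 := by
    intro w hw h0
    obtain ⟨u, rfl⟩ := mem_colSpace.mp hw
    rw [Matrix.mulVec_mulVec] at h0
    have h0' : (H * (B * W) * (B * W) ^ k) *ᵥ u = 0 := h0
    have hid : H * (B * W) * (B * W) ^ k = H * (B * W) ^ (k + 1) := by
      rw [Matrix.mul_assoc, ← pow_succ']
    rw [hid] at h0'
    have hB : (B * (H * (B * W) ^ (k + 1))) *ᵥ u = 0 := by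
      rw [← Matrix.mulVec_mulVec, h0', Matrix.mulVec_zero]
    rw [e3] at hB
    have : u ∈ nullSpace ((B * W) ^ k) := hnull ▸ mem_nullSpace.mpr hB
    exact mem_nullSpace.mp this
  -- the key identity: (X*W)*(B*W)*(X*W) = X*W
  have hGAG : X * W * (B * W) * (X * W) = X * W := by
    apply matrix_ext_of_mulVec
    intro v
    obtain ⟨u, hu⟩ := mem_colSpace.mp (hcolG ▸ mem_colSpace.mpr ⟨v, rfl⟩ :
      (X * W) *ᵥ v ∈ colSpace ((B * W) ^ k))
    have : (X * W * (B * W)) *ᵥ ((B * W) ^ k *ᵥ u) = (B * W) ^ k *ᵥ u := by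
      rw [Matrix.mulVec_mulVec, Matrix.mul_assoc, ← pow_succ', hX1]
    calc (X * W * (B * W) * (X * W)) *ᵥ v
        = (X * W * (B * W)) *ᵥ ((X * W) *ᵥ v) := by rw [Matrix.mulVec_mulVec]
      _ = (X * W * (B * W)) *ᵥ ((B * W) ^ k *ᵥ u) := by rw [hu]
      _ = (B * W) ^ k *ᵥ u := this
      _ = (X * W) *ᵥ v := hu
  -- right-associated rewrite rules
  have r1 : ∀ {p : ℕ} (Z : Matrix (Fin n) (Fin p) ℂ), B * (H * (B * Z)) = B * Z := by
    intro p Z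
    have := congrArg (· * Z) hH1
    simpa only [Matrix.mul_assoc] using this
  have r1' : B * (H * B) = B := by rw [← Matrix.mul_assoc, hH1]
  have rK : ∀ {p : ℕ} (Z : Matrix (Fin m) (Fin p) ℂ),
      X * (W * (B * (W * (X * (W * Z))))) = X * (W * Z) := by
    intro p Z
    have := congrArg (· * Z) hGAG
    simpa only [Matrix.mul_assoc] using this
  have rK' : X * (W * (B * (W * (X * W)))) = X * W := by
    simpa only [Matrix.mul_assoc] using hGAG
  -- convenient forms of Y
  have hBY : B * Y = B * W * (X * W) := by
    rw [hY]; simp only [Matrix.mul_assoc, r1]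
  have hY2 : Y = H * (B * W * (X * W)) := by
    rw [hY]; simp only [Matrix.mul_assoc]
  have hY3 : Y = H * (B * W) * (X * W) := by
    rw [hY]; simp only [Matrix.mul_assoc]
  have hYB2 : Y * B = H * (B * W * (X * W) * B) := by
    rw [hY]; simp only [Matrix.mul_assoc]
  have hYB3 : Y * B = H * (B * W) * (X * W * B) := by
    rw [hY]; simp only [Matrix.mul_assoc]
  -- column space of B*W*(X*W)
  have hcolAG : colSpace (B * W * (X * W)) = colSpace ((B * W) ^ k) := by
    rw [colSpace_mul, hcolG, ← colSpace_mul, ← pow_succ', hcolA]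
  refine ⟨⟨?_, ?_, ?_⟩, ⟨?_, ?_, ?_⟩, ?_, ?_, ?_⟩
  · -- (B*Y)*(B*Y) = B*Y
    rw [hY]; simp only [Matrix.mul_assoc, r1, rK, rK']
  · -- colSpace (B*Y) = colSpace ((B*W)^k)
    rw [hBY]; exact hcolAG
  · -- nullSpace (B*Y) = nullSpace (X*W)
    ext v
    rw [mem_nullSpace, mem_nullSpace, hBY]
    constructor
    · intro h
      refine hAinj ((X * W) *ᵥ v) (hcolG ▸ mem_colSpace.mpr ⟨v, rfl⟩) ?_
      rw [Matrix.mulVec_mulVec]; exact h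
    · intro h
      rw [← Matrix.mulVec_mulVec, h, Matrix.mulVec_zero]
  · -- (Y*B)*(Y*B) = Y*B
    rw [hY]; simp only [Matrix.mul_assoc, r1, rK, rK']
  · -- colSpace (Y*B) = colSpace (H*(B*W)^(k+1))
    have hMid : colSpace (B * W * (X * W) * B) = colSpace ((B * W) ^ (k + 1)) := by
      refine le_antisymm ?_ ?_
      · calc colSpace (B * W * (X * W) * B) ≤ colSpace (B * W * (X * W)) :=
              colSpace_mul_le _ _
          _ = colSpace ((B * W) ^ k) := hcolAG
          _ = colSpace ((B * W) ^ (k + 1)) := hcolA.symm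
      · have hI : B * W * (X * W) * B * (W * (B * W) ^ k) = (B * W) ^ (k + 1) := by
          have e1 : B * (W * (B * W) ^ k) = (B * W) ^ (k + 1) := by
            rw [pow_succ', Matrix.mul_assoc]
          have e2 : X * (W * (B * W) ^ (k + 1)) = (B * W) ^ k := by
            rw [← Matrix.mul_assoc]; exact hX1
          calc B * W * (X * W) * B * (W * (B * W) ^ k)
              = B * (W * (X * (W * (B * (W * (B * W) ^ k))))) := by
                simp only [Matrix.mul_assoc]
            _ = B * (W * (X * (W * (B * W) ^ (k + 1)))) := by rw [e1]
            _ = B * (W * (B * W) ^ k) := by rw [e2]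
            _ = (B * W) ^ (k + 1) := e1
        rw [← hI]
        exact colSpace_mul_le _ _
    rw [hYB2, colSpace_mul, hMid, ← colSpace_mul]
  · -- nullSpace (Y*B) = nullSpace (X*W*B)
    ext v
    rw [mem_nullSpace, mem_nullSpace, hYB3]
    constructor
    · intro h
      refine hHAinj ((X * W * B) *ᵥ v) ?_ ?_
      · exact hcolG ▸ colSpace_mul_le (X * W) B (mem_colSpace.mpr ⟨v, rfl⟩)
      · rw [Matrix.mulVec_mulVec]; exact h
    · intro h
      rw [← Matrix.mulVec_mulVec, h, Matrix.mulVec_zero]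
  · -- Y*B*Y = Y
    rw [hY]; simp only [Matrix.mul_assoc, r1, rK, rK']
  · -- colSpace Y = colSpace (H*(B*W)^(k+1))
    rw [hY2, colSpace_mul, hcolAG, ← hcolA, ← colSpace_mul]
  · -- nullSpace Y = nullSpace (X*W)
    ext v
    rw [mem_nullSpace, mem_nullSpace, hY3]
    constructor
    · intro h
      refine hHAinj ((X * W) *ᵥ v) (hcolG ▸ mem_colSpace.mpr ⟨v, rfl⟩) ?_
      rw [Matrix.mulVec_mulVec]; exact h
    · intro h
      rw [← Matrix.mulVec_mulVec, h, Matrix.mulVec_zero]
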